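/- Let X₁,…,X_d be i.i.d. random variables uniformly distributed on [0,1]. Then for every x ∈ ℝ with x ≥ 0, the probability P[X₁+…+X_d ≤ x] equals (1/d!) · ∑_{k=0}^{⌊x⌋} (−1)^k C(d,k) (x−k)^d (the Irwin–Hall distribution function). -/

import Mathlib

open Finset MeasureTheory
open scoped ENNReal

lemma ofReal_pow_div_factorial {a : ℝ} (ha : 0 ≤ a) (k n : ℕ) :
    ENNReal.ofReal (a ^ k / n.factorial) = ENNReal.ofReal a ^ k / (n.factorial : ℝ≥0∞) := by
  rw [ENNReal.ofReal_div_of_pos (by positivity), ENNReal.ofReal_pow ha,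
    ENNReal.ofReal_natCast]

lemma measurableSet_simplex (d : ℕ) (x : ℝ) :
    MeasurableSet {X : Fin d → ℝ | (∀ i, 0 ≤ X i) ∧ ∑ i, X i ≤ x} := by
  have : {X : Fin d → ℝ | (∀ i, 0 ≤ X i) ∧ ∑ i, X i ≤ x}
      = (⋂ i, {X : Fin d → ℝ | 0 ≤ X i}) ∩ {X | ∑ i, X i ≤ x} := by
    ext X; simp [Set.mem_iInter]
  rw [this]
  exact (MeasurableSet.iInter fun i =>
      measurableSet_le measurable_const (measurable_pi_apply i)).inter
    (measurableSet_le (Finset.measurable_sum _ fun i _ => measurable_pi_apply i)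
      measurable_const)

lemma simplex_volume : ∀ (d : ℕ) (x : ℝ), (0 ≤ x ∨ d ≠ 0) →
    volume {X : Fin d → ℝ | (∀ i, 0 ≤ X i) ∧ ∑ i, X i ≤ x}
      = ENNReal.ofReal x ^ d / (Nat.factorial d : ℝ≥0∞)
  | 0, x, h => by
      rcases h with hx | h
      · have : {X : Fin 0 → ℝ | (∀ i, 0 ≤ X i) ∧ ∑ i, X i ≤ x} = Set.univ := by
          ext X
          simp [Finset.sum_empty, hx, Fin.elim0]
        rw [this]
        simp [volume_pi, Measure.pi_univ]
      · simp at h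
  | (d+1), x, _ => by
      rcases lt_or_ge x 0 with hx | hx
      · have he : {X : Fin (d+1) → ℝ | (∀ i, 0 ≤ X i) ∧ ∑ i, X i ≤ x} = ∅ := by
          ext X
          simp only [Set.mem_setOf_eq, Set.mem_empty_iff_false, iff_false, not_and]
          intro h1 h2
          have : (0:ℝ) ≤ ∑ i, X i := Finset.sum_nonneg fun i _ => h1 i
          linarith
        rw [he]
        simp [ENNReal.ofReal_eq_zero.2 hx.le, zero_pow (Nat.succ_ne_zero d),
          ENNReal.zero_div]
      · -- Fubini step
        have key : MeasurePreserving
            (MeasurableEquiv.piFinSuccAbove (fun _ : Fin (d+1) => ℝ) 0) volume volume :=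
          volume_preserving_piFinSuccAbove _ 0
        set T : Set (ℝ × (Fin d → ℝ)) :=
          {p | (0 ≤ p.1 ∧ ∀ i, 0 ≤ p.2 i) ∧ p.1 + ∑ i, p.2 i ≤ x} with hT_def
        have hT : MeasurableSet T := by
          have : T = ({p : ℝ × (Fin d → ℝ) | 0 ≤ p.1}
              ∩ ⋂ i, {p : ℝ × (Fin d → ℝ) | 0 ≤ p.2 i})
              ∩ {p : ℝ × (Fin d → ℝ) | p.1 + ∑ i, p.2 i ≤ x} := by
            ext p; simp [hT_def, Set.mem_iInter, and_assoc]
          rw [this]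
          refine MeasurableSet.inter (MeasurableSet.inter ?_ ?_) ?_
          · exact measurableSet_le measurable_const measurable_fst
          · exact MeasurableSet.iInter fun i =>
              measurableSet_le measurable_const (measurable_snd.eval)
          · exact measurableSet_le (by fun_prop) measurable_const
        have hpre : {X : Fin (d+1) → ℝ | (∀ i, 0 ≤ X i) ∧ ∑ i, X i ≤ x}
            = (MeasurableEquiv.piFinSuccAbove (fun _ : Fin (d+1) => ℝ) 0) ⁻¹' T := by
          ext X
          simp only [Set.mem_preimage, hT_def, Set.mem_setOf_eq,
            MeasurableEquiv.piFinSuccAbove, MeasurableEquiv.coe_mk,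
            MeasurableEquiv.piFinSuccAbove_apply, Fin.removeNth, Fin.succAbove_zero]
          rw [Fin.forall_fin_succ, Fin.sum_univ_succ]
          tauto
        rw [hpre, key.measure_preimage hT.nullMeasurableSet]
        rw [Measure.volume_eq_prod, Measure.prod_apply hT]
        have hslice : ∀ t : ℝ, volume (Prod.mk t ⁻¹' T)
            = Set.indicator (Set.Icc 0 x)
                (fun t => ENNReal.ofReal ((x - t) ^ d / d.factorial)) t := by
          intro t
          by_cases ht : t ∈ Set.Icc 0 x
          · have h1 : Prod.mk t ⁻¹' T
                = {z : Fin d → ℝ | (∀ i, 0 ≤ z i) ∧ ∑ i, z i ≤ x - t} := by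
              ext z
              simp only [Set.mem_preimage, hT_def, Set.mem_setOf_eq]
              constructor
              · rintro ⟨⟨_, h2⟩, h3⟩; exact ⟨h2, by linarith⟩
              · rintro ⟨h2, h3⟩; exact ⟨⟨ht.1, h2⟩, by linarith⟩
            rw [h1, simplex_volume d (x - t) (Or.inl (by linarith [ht.2])),
              Set.indicator_of_mem ht, ofReal_pow_div_factorial (by linarith [ht.2])]
          · have h1 : Prod.mk t ⁻¹' T = ∅ := by
              ext z
              simp only [Set.mem_preimage, hT_def, Set.mem_setOf_eq,
                Set.mem_empty_iff_false, iff_false, not_and]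
              rintro ⟨ht0, hz⟩ hsum
              have hzz : (0:ℝ) ≤ ∑ i, z i := Finset.sum_nonneg fun i _ => hz i
              exact ht ⟨ht0, by linarith⟩
            rw [h1, Set.indicator_of_notMem ht]
            simp
        calc ∫⁻ t, volume (Prod.mk t ⁻¹' T)
            = ∫⁻ t, Set.indicator (Set.Icc 0 x)
                (fun t => ENNReal.ofReal ((x - t) ^ d / d.factorial)) t := by
              exact lintegral_congr hslice
          _ = ∫⁻ t in Set.Icc 0 x, ENNReal.ofReal ((x - t) ^ d / d.factorial) := by
              rw [lintegral_indicator measurableSet_Icc]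
          _ = ENNReal.ofReal (∫ t in Set.Icc 0 x, (x - t) ^ d / d.factorial) := by
              rw [← ofReal_integral_eq_lintegral_ofReal]
              · exact (Continuous.integrableOn_Icc (by fun_prop))
              · filter_upwards [ae_restrict_mem measurableSet_Icc] with t ht
                have : (0:ℝ) ≤ x - t := by linarith [ht.2]
                positivity
          _ = ENNReal.ofReal x ^ (d+1) / ((d+1).factorial : ℝ≥0∞) := by
              rw [MeasureTheory.integral_Icc_eq_integral_Ioc,
                ← intervalIntegral.integral_of_le hx, intervalIntegral.integral_div,
                intervalIntegral.integral_comp_sub_left (fun u => u ^ d) x]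
              simp only [sub_self, sub_zero, integral_pow]
              rw [← ofReal_pow_div_factorial hx]
              congr 1
              rw [Nat.factorial_succ]
              push_cast
              field_simp
              simp


lemma measure_ie {α : Type*} [MeasurableSpace α] (μ : Measure α) {ι : Type*} [DecidableEq ι]
    (B : ι → Set α) (hB : ∀ i, MeasurableSet (B i)) :
    ∀ (s : Finset ι) (A : Set α), μ A ≠ ⊤ →
      (μ (A \ ⋃ i ∈ s, B i)).toReal
        = ∑ t ∈ s.powerset, (-1 : ℝ) ^ t.card * (μ (A ∩ ⋂ i ∈ t, B i)).toReal := by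
  intro s
  induction s using Finset.induction_on with
  | empty => intro A hA; simp
  | @insert a s ha ih =>
    intro A hA
    have hfin : ∀ C : Set α, C ⊆ A → μ C ≠ ⊤ :=
      fun C hC => ((measure_mono hC).trans_lt (lt_top_iff_ne_top.2 hA)).ne
    have key : A \ ⋃ i ∈ insert a s, B i = (A \ B a) \ ⋃ i ∈ s, B i := by
      rw [Finset.set_biUnion_insert, ← Set.diff_diff]
    rw [key, ih (A \ B a) (hfin _ Set.diff_subset)]
    rw [Finset.sum_powerset_insert ha]
    rw [← Finset.sum_add_distrib]
    refine Finset.sum_congr rfl fun t ht => ?_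
    have hat : a ∉ t := fun h => ha (Finset.mem_powerset.1 ht h)
    have hC : MeasurableSet (B a) := hB a
    have hset : (A \ B a) ∩ ⋂ i ∈ t, B i = (A ∩ ⋂ i ∈ t, B i) \ B a := by
      ext y; simp only [Set.mem_inter_iff, Set.mem_diff]; tauto
    have hset2 : A ∩ ⋂ i ∈ insert a t, B i = (A ∩ ⋂ i ∈ t, B i) ∩ B a := by
      rw [Finset.set_biInter_insert]
      ext y; simp only [Set.mem_inter_iff]; tauto
    have hd := measure_diff_add_inter (μ := μ) (A ∩ ⋂ i ∈ t, B i) hC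
    have h1 : μ ((A ∩ ⋂ i ∈ t, B i) \ B a) ≠ ⊤ :=
      hfin _ (Set.diff_subset.trans Set.inter_subset_left)
    have h2 : μ ((A ∩ ⋂ i ∈ t, B i) ∩ B a) ≠ ⊤ :=
      hfin _ (Set.inter_subset_left.trans Set.inter_subset_left)
    have htr : (μ ((A ∩ ⋂ i ∈ t, B i) \ B a)).toReal
        + (μ ((A ∩ ⋂ i ∈ t, B i) ∩ B a)).toReal = (μ (A ∩ ⋂ i ∈ t, B i)).toReal := by
      rw [← ENNReal.toReal_add h1 h2, hd]
    rw [hset, hset2, Finset.card_insert_of_notMem hat, pow_succ]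
    have heq : (μ ((A ∩ ⋂ i ∈ t, B i) \ B a)).toReal
        = (μ (A ∩ ⋂ i ∈ t, B i)).toReal - (μ ((A ∩ ⋂ i ∈ t, B i) ∩ B a)).toReal := by
      linarith
    rw [heq]; ring

lemma simplex_volume' (d : ℕ) (hd : d ≠ 0) (y : ℝ) :
    volume {X : Fin d → ℝ | (∀ i, 0 ≤ X i) ∧ ∑ i, X i ≤ y}
      = ENNReal.ofReal (max y 0 ^ d / d.factorial) := by
  rcases le_total 0 y with hy | hy
  · rw [simplex_volume d y (Or.inl hy), max_eq_left hy, ofReal_pow_div_factorial hy]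
  · rw [simplex_volume d y (Or.inr hd), max_eq_right hy,
      ENNReal.ofReal_eq_zero.2 hy, zero_pow hd, ENNReal.zero_div]
    simp [zero_pow hd]


/-- **Irwin–Hall.** For `X₁,…,X_d` i.i.d. uniform on `[0,1]` and `x ≥ 0`,
`P[X₁+…+X_d ≤ x] = (1/d!) ∑_{k=0}^{⌊x⌋} (−1)^k C(d,k) (x−k)^d`. The probability is expressed
as Lebesgue volume of the corresponding subset of the unit cube `[0,1]^d`. -/
theorem irwin_hall_cdf (d : ℕ) (hd : 1 ≤ d) (x : ℝ) (hx : 0 ≤ x) :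
    volume {X : Fin d → ℝ | (∀ i, X i ∈ Set.Icc (0 : ℝ) 1) ∧ ∑ i, X i ≤ x}
      = ENNReal.ofReal
          ((1 / (Nat.factorial d : ℝ)) *
            ∑ k ∈ Finset.range (⌊x⌋₊ + 1), (-1 : ℝ) ^ k * (d.choose k) * (x - k) ^ d) := by
  classical
  have hd0 : d ≠ 0 := Nat.one_le_iff_ne_zero.1 hd
  set S : Set (Fin d → ℝ) :=
    {X | (∀ i, X i ∈ Set.Icc (0 : ℝ) 1) ∧ ∑ i, X i ≤ x} with hS_def
  set A : Set (Fin d → ℝ) := {X | (∀ i, 0 ≤ X i) ∧ ∑ i, X i ≤ x} with hA_def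
  set B : Fin d → Set (Fin d → ℝ) := fun i => {X | 1 ≤ X i} with hB_def
  have hB : ∀ i, MeasurableSet (B i) := fun i =>
    measurableSet_le measurable_const (measurable_pi_apply i)
  have hAvol : volume A = ENNReal.ofReal x ^ d / (d.factorial : ℝ≥0∞) :=
    simplex_volume d x (Or.inl hx)
  have hAfin : volume A ≠ ⊤ := by
    rw [hAvol]
    exact (ENNReal.div_lt_top (ENNReal.pow_ne_top ENNReal.ofReal_ne_top)
      (by exact_mod_cast (Nat.factorial_pos d).ne')).ne
  -- Step 1: replace S by A \ ⋃ B i up to a null set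
  have hnull : volume (⋃ i : Fin d, {X : Fin d → ℝ | X i = 1}) = 0 := by
    refine measure_iUnion_null fun i => ?_
    rw [volume_pi]
    exact Measure.pi_hyperplane _ i 1
  have hsub1 : (A \ ⋃ i ∈ Finset.univ, B i) ⊆ S := by
    rintro y ⟨⟨h0, hs⟩, hu⟩
    simp only [Finset.mem_univ, Set.mem_iUnion, hB_def, Set.mem_setOf_eq,
      exists_prop, true_and, not_exists, not_le] at hu
    exact ⟨fun i => ⟨h0 i, (hu i).le⟩, hs⟩
  have hsub2 : S ⊆ (A \ ⋃ i ∈ Finset.univ, B i) ∪ ⋃ i : Fin d, {X : Fin d → ℝ | X i = 1} := by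
    intro y hy
    obtain ⟨h01, hs⟩ := hy
    by_cases hu : y ∈ ⋃ i ∈ Finset.univ, B i
    · right
      simp only [Finset.mem_univ, Set.mem_iUnion, hB_def, Set.mem_setOf_eq,
        exists_prop, true_and] at hu
      obtain ⟨i, hi⟩ := hu
      exact Set.mem_iUnion.2 ⟨i, le_antisymm (h01 i).2 hi⟩
    · exact Or.inl ⟨⟨fun i => (h01 i).1, hs⟩, hu⟩
  have hSvol : volume S = volume (A \ ⋃ i ∈ Finset.univ, B i) := by
    refine le_antisymm ?_ (measure_mono hsub1)
    calc volume S ≤ volume ((A \ ⋃ i ∈ Finset.univ, B i)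
          ∪ ⋃ i : Fin d, {X : Fin d → ℝ | X i = 1}) := measure_mono hsub2
      _ ≤ volume (A \ ⋃ i ∈ Finset.univ, B i)
          + volume (⋃ i : Fin d, {X : Fin d → ℝ | X i = 1}) := measure_union_le _ _
      _ = volume (A \ ⋃ i ∈ Finset.univ, B i) := by rw [hnull, add_zero]
  -- Step 2: translation computes each intersection volume
  have htrans : ∀ t : Finset (Fin d),
      volume (A ∩ ⋂ i ∈ t, B i)
        = ENNReal.ofReal (max (x - t.card) 0 ^ d / d.factorial) := by
    intro t
    set c : Fin d → ℝ := fun i => if i ∈ t then 1 else 0 with hc_def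
    have hsum_c : ∑ i, c i = t.card := by
      rw [hc_def]
      rw [Finset.sum_ite_mem, Finset.univ_inter, Finset.sum_const, nsmul_eq_mul, mul_one]
    have hset : A ∩ ⋂ i ∈ t, B i
        = (fun y : Fin d → ℝ => -c + y) ⁻¹'
            {z : Fin d → ℝ | (∀ i, 0 ≤ z i) ∧ ∑ i, z i ≤ x - t.card} := by
      ext y
      simp only [Set.mem_inter_iff, Set.mem_preimage, Set.mem_setOf_eq, Set.mem_iInter,
        hA_def, hB_def, Pi.add_apply, Pi.neg_apply]
      have hsum : ∑ i, (-c i + y i) = ∑ i, y i - t.card := by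
        rw [Finset.sum_add_distrib, Finset.sum_neg_distrib, hsum_c]
        ring
      constructor
      · rintro ⟨⟨h0, hs⟩, h1⟩
        refine ⟨fun i => ?_, by rw [hsum]; linarith⟩
        by_cases hi : i ∈ t
        · have := h1 i hi
          simp only [hc_def, hi, if_true]
          linarith
        · have := h0 i
          simp only [hc_def, hi, if_false]
          linarith
      · rintro ⟨h0, hs⟩
        rw [hsum] at hs
        refine ⟨⟨fun i => ?_, by linarith⟩, fun i hi => ?_⟩
        · have := h0 i
          by_cases hi : i ∈ t <;> simp only [hc_def, hi, if_true, if_false] at this <;> linarith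
        · have := h0 i
          simp only [hc_def, hi, if_true] at this
          linarith
    rw [hset, measure_preimage_add, simplex_volume' d hd0]
  -- Step 3: inclusion-exclusion and summation
  have hIE := measure_ie volume B hB Finset.univ A hAfin
  have hfloor : ∀ k : ℕ, k ≤ ⌊x⌋₊ → (k : ℝ) ≤ x := fun k hk =>
    le_trans (by exact_mod_cast hk) (Nat.floor_le hx)
  set G : ℕ → ℝ := fun j => (-1 : ℝ) ^ j * (d.choose j) * max (x - j) 0 ^ d with hG_def
  have hG_floor : ∀ j, ⌊x⌋₊ < j → G j = 0 := by
    intro j hj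
    have : x - j < 0 := by
      have h1 : x < ⌊x⌋₊ + 1 := Nat.lt_floor_add_one x
      have h2 : (⌊x⌋₊ : ℝ) + 1 ≤ j := by exact_mod_cast hj
      linarith
    simp [hG_def, max_eq_right this.le, zero_pow hd0]
  have hG_choose : ∀ j, d < j → G j = 0 := by
    intro j hj
    simp [hG_def, Nat.choose_eq_zero_of_lt hj]
  have hrange : ∑ j ∈ Finset.range (d + 1), G j
      = ∑ k ∈ Finset.range (⌊x⌋₊ + 1), (-1 : ℝ) ^ k * (d.choose k) * (x - k) ^ d := by
    have h1 : ∑ j ∈ Finset.range (d + 1), G j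
        = ∑ j ∈ Finset.range (max (d + 1) (⌊x⌋₊ + 1)), G j := by
      refine Finset.sum_subset (Finset.range_subset_range.2 (le_max_left _ _)) ?_
      intro j _ hj
      exact hG_choose j (by simpa using Finset.mem_range.not.1 hj)
    have h2 : ∑ j ∈ Finset.range (⌊x⌋₊ + 1), G j
        = ∑ j ∈ Finset.range (max (d + 1) (⌊x⌋₊ + 1)), G j := by
      refine Finset.sum_subset (Finset.range_subset_range.2 (le_max_right _ _)) ?_
      intro j _ hj
      exact hG_floor j (by simpa using Finset.mem_range.not.1 hj)
    rw [h1, ← h2]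
    refine Finset.sum_congr rfl fun k hk => ?_
    have hk' : (k : ℝ) ≤ x := hfloor k (Nat.lt_succ_iff.1 (Finset.mem_range.1 hk))
    rw [hG_def]
    simp only []
    rw [max_eq_left (by linarith)]
  have hcardu : (Finset.univ : Finset (Fin d)).card = d := by simp
  have htoReal : (volume S).toReal
      = (1 / (d.factorial : ℝ)) *
          ∑ k ∈ Finset.range (⌊x⌋₊ + 1), (-1 : ℝ) ^ k * (d.choose k) * (x - k) ^ d := by
    rw [hSvol, hIE]
    have hterm : ∀ t ∈ (Finset.univ : Finset (Fin d)).powerset,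
        (-1 : ℝ) ^ t.card * (volume (A ∩ ⋂ i ∈ t, B i)).toReal
          = (-1 : ℝ) ^ t.card * (max (x - t.card) 0 ^ d / d.factorial) := by
      intro t _
      rw [htrans t, ENNReal.toReal_ofReal (by positivity)]
    rw [Finset.sum_congr rfl hterm, Finset.sum_powerset]
    simp only [hcardu]
    rw [← hrange, Finset.mul_sum]
    refine Finset.sum_congr rfl fun j hj => ?_
    have hinner : ∀ t ∈ Finset.powersetCard j (Finset.univ : Finset (Fin d)),
        (-1 : ℝ) ^ t.card * (max (x - t.card) 0 ^ d / d.factorial)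
          = (-1 : ℝ) ^ j * (max (x - j) 0 ^ d / d.factorial) := by
      intro t ht
      rw [(Finset.mem_powersetCard.1 ht).2]
    rw [Finset.sum_congr rfl hinner, Finset.sum_const, Finset.card_powersetCard, hcardu,
      nsmul_eq_mul, hG_def]
    have hfac : (d.factorial : ℝ) ≠ 0 := by exact_mod_cast (Nat.factorial_pos d).ne'
    field_simp
  have hSfin : volume S ≠ ⊤ := by
    rw [hSvol]
    exact ((measure_mono Set.diff_subset).trans_lt (lt_top_iff_ne_top.2 hAfin)).ne
  rw [← ENNReal.ofReal_toReal hSfin, htoReal]
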